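/- For every finitely generated subgroup H of G = F × A, the rank of H (the minimal cardinality of a generating set) equals the rank of Hπ plus the rank of L_H; that is, rk(H) = rk(Hπ) + rk(H ∩ A). -/

import Mathlib

open Function
set_option maxHeartbeats 1000000 in

/-- Core module lemma: if a `ℤ`-module `M` is generated (as an additive group) by `S`,
and `f : M →+ N` is surjective onto a free module with finite basis indexed by `ι`,
then `ker f` is generated by at most `S.card - card ι` elements. -/
lemma ker_gen_card_le {M N : Type} [AddCommGroup M] [AddCommGroup N]
    {ι : Type} [Fintype ι] (bN : Module.Basis ι ℤ N)
    (f : M →+ N) (hf : Surjective f) (S : Finset M)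
    (hS : AddSubgroup.closure (S : Set M) = ⊤) :
    ∃ T : Finset M, T.card + Fintype.card ι ≤ S.card ∧
      AddSubgroup.closure (T : Set M) = f.ker := by
  classical
  set n := S.card with hn
  -- the span of S is everything
  have hspan : Submodule.span ℤ (S : Set M) = ⊤ := by
    rw [eq_top_iff]
    intro x _
    have hx : x ∈ AddSubgroup.closure (S : Set M) := hS ▸ AddSubgroup.mem_top x
    rw [← Submodule.span_int_eq_addSubgroupClosure] at hx
    exact hx
  -- enumerate S
  set v : Fin n → M := fun i => ((S.equivFin.symm i : S) : M) with hv
  have hvrange : Set.range v = (S : Set M) := by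
    ext x
    constructor
    · rintro ⟨i, rfl⟩; exact (S.equivFin.symm i).2
    · intro hx; exact ⟨S.equivFin ⟨x, hx⟩, by simp [hv]⟩
  set φ : (Fin n → ℤ) →ₗ[ℤ] M := (Pi.basisFun ℤ (Fin n)).constr ℤ v with hφ
  have hφsurj : Surjective φ := by
    rw [← LinearMap.range_eq_top, Module.Basis.constr_range, hvrange, hspan]
  set g : (Fin n → ℤ) →ₗ[ℤ] N := f.toIntLinearMap ∘ₗ φ with hg
  have hgsurj : Surjective g := hf.comp hφsurj
  set K : Submodule ℤ (Fin n → ℤ) := LinearMap.ker g with hK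
  obtain ⟨k, bK⟩ := Submodule.basisOfPid (Pi.basisFun ℤ (Fin n)) K
  haveI : Module.Free ℤ N := Module.Free.of_basis bN
  haveI : Module.Finite ℤ N := Module.Finite.of_basis bN
  haveI : Module.Free ℤ K := Module.Free.of_basis bK
  haveI : Module.Finite ℤ K := Module.Finite.of_basis bK
  -- split the surjection g
  obtain ⟨s, hs⟩ := g.exists_rightInverse_of_surjective (LinearMap.range_eq_top.2 hgsurj)
  have hsapp : ∀ y, g (s y) = y := fun y => congrFun (congrArg DFunLike.coe hs) y
  have hsinj : Injective s := by
    intro a b hab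
    have := congrArg g hab
    simpa [hsapp] using this
  have li1 : LinearIndependent ℤ (fun i : Fin k => ((bK i : Fin n → ℤ))) :=
    bK.linearIndependent.map' K.subtype (Submodule.ker_subtype K)
  have li2 : LinearIndependent ℤ (fun j : ι => s (bN j)) :=
    bN.linearIndependent.map' s (LinearMap.ker_eq_bot.2 hsinj)
  have hr1 : Submodule.span ℤ (Set.range fun i : Fin k => ((bK i : Fin n → ℤ))) = K := by
    have : (Set.range fun i : Fin k => ((bK i : Fin n → ℤ))) = K.subtype '' Set.range bK := by
      ext x; simp [Set.range_comp]
    rw [this, ← Submodule.map_span, Module.Basis.span_eq, Submodule.map_top, Submodule.range_subtype]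
  have hr2 : Submodule.span ℤ (Set.range fun j : ι => s (bN j)) = LinearMap.range s := by
    have : (Set.range fun j : ι => s (bN j)) = s '' Set.range bN := by
      ext x; simp [Set.range_comp]
    rw [this, ← Submodule.map_span, Module.Basis.span_eq, Submodule.map_top]
  have hdisj : Disjoint (Submodule.span ℤ (Set.range fun i : Fin k => ((bK i : Fin n → ℤ))))
      (Submodule.span ℤ (Set.range fun j : ι => s (bN j))) := by
    rw [hr1, hr2, Submodule.disjoint_def]
    rintro x hxK ⟨y, rfl⟩
    have : g (s y) = 0 := hxK
    rw [hsapp] at this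
    rw [this, map_zero]
  have li : LinearIndependent ℤ (Sum.elim (fun i : Fin k => ((bK i : Fin n → ℤ)))
      (fun j : ι => s (bN j))) := li1.sum_type li2 hdisj
  have hcard := li.fintype_card_le_finrank
  have hrank : k + Fintype.card ι ≤ n := by
    have h1 : Module.finrank ℤ (Fin n → ℤ) = n := by simp
    rw [Fintype.card_sum, Fintype.card_fin, h1] at hcard
    exact hcard
  -- the generating set of the kernel
  set T : Finset M := Finset.image (fun i : Fin k => φ ((bK i : Fin n → ℤ))) Finset.univ with hT
  refine ⟨T, ?_, ?_⟩
  · have hTk : T.card ≤ k := by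
      rw [hT]
      refine Finset.card_image_le.trans ?_
      simp
    omega
  · -- closure T = ker f
    have hTspan : Submodule.span ℤ (T : Set M) = Submodule.map φ K := by
      have : (T : Set M) = (φ ∘ₗ K.subtype) '' (Set.range bK) := by
        rw [hT, Finset.coe_image, Finset.coe_univ, Set.image_univ]
        ext x
        simp [Set.range_comp]
      rw [this, ← Submodule.map_span, Module.Basis.span_eq, Submodule.map_top,
        LinearMap.range_comp, Submodule.range_subtype]
    have hmapK : Submodule.map φ K = LinearMap.ker f.toIntLinearMap := by
      ext x
      constructor
      · rintro ⟨y, hy, rfl⟩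
        exact hy
      · intro hx
        obtain ⟨y, rfl⟩ := hφsurj x
        exact ⟨y, hx, rfl⟩
    have := congrArg Submodule.toAddSubgroup (hTspan.trans hmapK)
    rw [Submodule.span_int_eq_addSubgroupClosure] at this
    rw [this, AddMonoidHom.coe_toIntLinearMap_ker, AddSubgroup.toIntSubmodule_toAddSubgroup]

/-- Passing a multiplicative closure to the additive world. -/
lemma mem_addClosure_of_mem_closure {Q : Type} [Group Q] {S : Set Q} {y : Q}
    (hy : y ∈ Subgroup.closure S) :
    Additive.ofMul y ∈ AddSubgroup.closure (Additive.ofMul '' S) := by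
  induction hy using Subgroup.closure_induction with
  | mem z hz => exact AddSubgroup.subset_closure ⟨z, hz, rfl⟩
  | one => exact zero_mem _
  | mul a b _ _ ha hb => exact add_mem ha hb
  | inv a _ ha => exact neg_mem ha

lemma closure_toAddSubgroup {Q : Type} [Group Q] (S : Set Q) :
    Subgroup.toAddSubgroup (Subgroup.closure S) =
      AddSubgroup.closure (Additive.ofMul '' S) := by
  apply le_antisymm
  · intro x hx
    exact mem_addClosure_of_mem_closure hx
  · rw [AddSubgroup.closure_le]
    rintro _ ⟨z, hz, rfl⟩
    exact Subgroup.subset_closure (G := Q) (k := S) hz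

lemma mem_closure_of_mem_addClosure {Q : Type} [Group Q] {T : Set (Additive Q)}
    {x : Additive Q} (hx : x ∈ AddSubgroup.closure T) :
    Additive.toMul x ∈ Subgroup.closure (Additive.toMul '' T) := by
  induction hx using AddSubgroup.closure_induction with
  | mem z hz => exact Subgroup.subset_closure ⟨z, hz, rfl⟩
  | zero => exact one_mem _
  | add a b _ _ ha hb => exact mul_mem ha hb
  | neg a _ ha => exact inv_mem ha

lemma closure_eq_of_addClosure {Q : Type} [Group Q] {T : Set (Additive Q)} {Kgrp : Subgroup Q}
    (h : AddSubgroup.closure T = Subgroup.toAddSubgroup Kgrp) :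
    Subgroup.closure (Additive.toMul '' T) = Kgrp := by
  apply le_antisymm
  · rw [Subgroup.closure_le]
    rintro _ ⟨z, hz, rfl⟩
    have hz' : z ∈ AddSubgroup.closure T := AddSubgroup.subset_closure hz
    rw [h] at hz'
    exact hz'
  · intro y hy
    have hy' : Additive.ofMul y ∈ AddSubgroup.closure T := by
      rw [h]; exact hy
    exact mem_closure_of_mem_addClosure hy'

/-- Upper bound: the rank of a product is at most the sum of the ranks. -/
lemma rank_prod_le (P' L' : Type) [Group P'] [Group L'] [Group.FG P'] [Group.FG L']
    [Group.FG (P' × L')] :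
    Group.rank (P' × L') ≤ Group.rank P' + Group.rank L' := by
  classical
  obtain ⟨S, hScard, hSc⟩ := Group.rank_spec P'
  obtain ⟨T, hTcard, hTc⟩ := Group.rank_spec L'
  set U : Finset (P' × L') :=
    S.image (MonoidHom.inl P' L') ∪ T.image (MonoidHom.inr P' L') with hU
  have hUc : Subgroup.closure (U : Set (P' × L')) = ⊤ := by
    rw [eq_top_iff, ← Subgroup.top_prod_top, Subgroup.prod_le_iff]
    constructor
    · rw [← hSc, MonoidHom.map_closure]
      apply Subgroup.closure_mono
      rintro _ ⟨a, ha, rfl⟩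
      exact Finset.mem_coe.2 (Finset.mem_union_left _
        (Finset.mem_image_of_mem _ (Finset.mem_coe.1 ha)))
    · rw [← hTc, MonoidHom.map_closure]
      apply Subgroup.closure_mono
      rintro _ ⟨a, ha, rfl⟩
      exact Finset.mem_coe.2 (Finset.mem_union_right _
        (Finset.mem_image_of_mem _ (Finset.mem_coe.1 ha)))
  have h1 : Group.rank (P' × L') ≤ U.card := Group.rank_le hUc
  have h2 : U.card ≤ S.card + T.card := by
    refine (Finset.card_union_le _ _).trans ?_
    exact Nat.add_le_add Finset.card_image_le Finset.card_image_le
  omega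

/-- Lower bound: for a free group `P'` and an abelian group `L'`,
`rank P' + rank L' ≤ rank (P' × L')`. -/
lemma grp_rank_add_rank_le_rank_prod (P' L' : Type) [Group P'] [IsFreeGroup P'] [Group.FG P']
    [CommGroup L'] [Group.FG L'] [Group.FG (P' × L')] :
    Group.rank P' + Group.rank L' ≤ Group.rank (P' × L') := by
  classical
  obtain ⟨S, hScard, hSc⟩ := Group.rank_spec (P' × L')
  set β : P' × L' →* Abelianization P' × L' :=
    MonoidHom.prodMap Abelianization.of (MonoidHom.id L') with hβ
  have hofsurj : Function.Surjective (Abelianization.of : P' →* Abelianization P') :=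
    fun x => Quotient.inductionOn x (fun p => ⟨p, rfl⟩)
  have hβsurj : Function.Surjective β := fun q => by
    obtain ⟨p, hp⟩ := hofsurj q.1
    exact ⟨(p, q.2), Prod.ext hp rfl⟩
  set S' : Finset (Abelianization P' × L') := S.image β with hS'
  have hS'c : Subgroup.closure (S' : Set (Abelianization P' × L')) = ⊤ := by
    rw [hS', Finset.coe_image, ← MonoidHom.map_closure, hSc,
      Subgroup.map_top_of_surjective β hβsurj]
  set S'' : Finset (Additive (Abelianization P' × L')) := S'.image Additive.ofMul with hS''
  have hS''c : AddSubgroup.closure (S'' : Set (Additive (Abelianization P' × L'))) = ⊤ := by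
    rw [hS'', Finset.coe_image, ← closure_toAddSubgroup, hS'c]
    rfl
  -- a basis for the additive abelianization of `P'`
  set e0 : Abelianization (FreeGroup (IsFreeGroup.Generators P')) ≃* Abelianization P' :=
    MulEquiv.abelianizationCongr (IsFreeGroup.mulEquiv P') with he0
  set e : FreeAbelianGroup (IsFreeGroup.Generators P') ≃+ Additive (Abelianization P') :=
    MulEquiv.toAdditive e0 with he
  set bN : Module.Basis (IsFreeGroup.Generators P') ℤ (Additive (Abelianization P')) :=
    (FreeAbelianGroup.basis (IsFreeGroup.Generators P')).map e.toIntLinearEquiv with hbN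
  haveI : Group.FG (Abelianization P') := Group.fg_of_surjective hofsurj
  haveI : Module.Finite ℤ (Additive (Abelianization P')) :=
    Module.Finite.iff_addGroup_fg.mpr inferInstance
  haveI : Finite (IsFreeGroup.Generators P') := Module.Finite.finite_basis bN
  haveI : Fintype (IsFreeGroup.Generators P') := Fintype.ofFinite _
  -- `rank P' ≤ card (Generators P')`
  have hclP : Subgroup.closure
      (Set.range (IsFreeGroup.of : IsFreeGroup.Generators P' → P')) = ⊤ := by
    have hr : (Set.range (IsFreeGroup.of : IsFreeGroup.Generators P' → P'))
        = ((IsFreeGroup.mulEquiv P' : FreeGroup (IsFreeGroup.Generators P') →* P') ''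
            Set.range (FreeGroup.of : IsFreeGroup.Generators P' → _)) := by
      rw [← Set.range_comp]
      rfl
    rw [hr, ← MonoidHom.map_closure, FreeGroup.closure_range_of,
      Subgroup.map_top_of_surjective _ (IsFreeGroup.mulEquiv P').surjective]
  have hrankP : Group.rank P' ≤ Fintype.card (IsFreeGroup.Generators P') := by
    have hfin : Subgroup.closure
        ((Finset.univ.image (IsFreeGroup.of : IsFreeGroup.Generators P' → P') : Finset P') :
          Set P') = ⊤ := by
      rw [Finset.coe_image, Finset.coe_univ, Set.image_univ, hclP]
    refine (Group.rank_le (G := P') hfin).trans ?_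
    refine Finset.card_image_le.trans ?_
    simp
  -- project onto the abelianization part
  set f : Additive (Abelianization P' × L') →+ Additive (Abelianization P') :=
    MonoidHom.toAdditive (MonoidHom.fst (Abelianization P') L') with hf
  have hfsurj : Function.Surjective f := fun x => ⟨(Additive.toMul x, 1), rfl⟩
  obtain ⟨T, hTcard, hTc⟩ := ker_gen_card_le bN f hfsurj S'' hS''c
  have hTm : Subgroup.closure
      (Additive.toMul '' (T : Set (Additive (Abelianization P' × L')))) =
        MonoidHom.ker (MonoidHom.fst (Abelianization P') L') := by
    apply closure_eq_of_addClosure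
    rw [hTc, hf]
    rfl
  have hsnd : Subgroup.map (MonoidHom.snd (Abelianization P') L')
      (MonoidHom.ker (MonoidHom.fst (Abelianization P') L')) = ⊤ := by
    rw [eq_top_iff]
    rintro l -
    exact ⟨(1, l), MonoidHom.mem_ker.2 rfl, rfl⟩
  have hL : Subgroup.closure
      ((T.image (fun t => (Additive.toMul t).2) : Finset L') : Set L') = ⊤ := by
    rw [Finset.coe_image]
    have himg : ((fun t : Additive (Abelianization P' × L') => (Additive.toMul t).2) ''
        (T : Set (Additive (Abelianization P' × L'))))
        = (MonoidHom.snd (Abelianization P') L') ''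
            (Additive.toMul '' (T : Set (Additive (Abelianization P' × L')))) := by
      rw [← Set.image_comp]
      rfl
    rw [himg, ← MonoidHom.map_closure, hTm, hsnd]
  have hrankL : Group.rank L' ≤ T.card :=
    (Group.rank_le (G := L') hL).trans Finset.card_image_le
  have hS''card : S''.card ≤ S.card := by
    refine Finset.card_image_le.trans ?_
    rw [hS']
    exact Finset.card_image_le
  omega

/-- For a finitely generated subgroup `H ≤ F × A`,
`rk H = rk (Hπ) + rk (H ∩ A)`. -/
theorem rank_subgroup_eq_rank_proj_add_rank_abelian_part
    (F A : Type) [Group F] [IsFreeGroup F] [CommGroup A] [Group.FG A]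
    (H : Subgroup (F × A)) (hH : H.FG)
    [Group.FG H] [Group.FG (H.map (MonoidHom.fst F A))]
    [Group.FG (H.comap (MonoidHom.inr F A))] :
    Group.rank H =
      Group.rank (H.map (MonoidHom.fst F A)) + Group.rank (H.comap (MonoidHom.inr F A)) := by
  classical
  set P := H.map (MonoidHom.fst F A) with hP
  set L := H.comap (MonoidHom.inr F A) with hL
  -- the projection of `H` onto `P`
  set π' : H →* P := (MonoidHom.fst F A).subgroupMap H with hπ'
  have hπ'surj : Function.Surjective π' := (MonoidHom.fst F A).subgroupMap_surjective H
  -- a splitting of the projection, using freeness of `P`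
  set σ : P →* H := IsFreeGroup.lift (fun g => (hπ'surj (IsFreeGroup.of g)).choose) with hσ
  have hπσ : ∀ p : P, π' (σ p) = p := by
    have hcomp : π'.comp σ = MonoidHom.id P := by
      apply IsFreeGroup.ext_hom
      intro g
      simp only [MonoidHom.comp_apply, MonoidHom.id_apply, hσ, IsFreeGroup.lift_of]
      exact (hπ'surj (IsFreeGroup.of g)).choose_spec
    intro p
    exact DFunLike.congr_fun hcomp p
  -- the inclusion of `L` into `H`
  have hLmem : ∀ l : L, ((1 : F), (l : A)) ∈ H := fun l => l.2
  set ν : L →* H := MonoidHom.codRestrict ((MonoidHom.inr F A).comp L.subtype) H hLmem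
    with hν
  have hνval : ∀ l : L, ((ν l : F × A)) = ((1 : F), (l : A)) := fun l => rfl
  -- `ν l` is central in `H`
  have hcent : ∀ (l : L) (h : H), ν l * h = h * ν l := by
    intro l h
    apply Subtype.ext
    show ((1 : F), (l : A)) * (h : F × A) = (h : F × A) * ((1 : F), (l : A))
    apply Prod.ext
    · simp
    · simp [mul_comm]
  -- the isomorphism `P × L ≃* H`
  set Φ : P × L →* H :=
    { toFun := fun q => σ q.1 * ν q.2
      map_one' := by simp
      map_mul' := by
        rintro ⟨p₁, l₁⟩ ⟨p₂, l₂⟩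
        show σ (p₁ * p₂) * ν (l₁ * l₂) = (σ p₁ * ν l₁) * (σ p₂ * ν l₂)
        rw [map_mul, map_mul, mul_assoc, mul_assoc]
        congr 1
        rw [← mul_assoc, ← hcent l₁ (σ p₂), mul_assoc] } with hΦ
  have hπν : ∀ l : L, π' (ν l) = 1 := by
    intro l
    apply Subtype.ext
    show ((ν l : F × A)).1 = 1
    rw [hνval]
  have hπσfst : ∀ p : P, ((σ p : F × A)).1 = (p : F) := by
    intro p
    have := hπσ p
    exact congrArg Subtype.val this
  have hΦinj : Function.Injective Φ := by
    rw [injective_iff_map_eq_one]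
    rintro ⟨p, l⟩ hq
    have hq' : σ p * ν l = 1 := hq
    have hp : p = 1 := by
      have := congrArg π' hq'
      rw [map_mul, hπσ, hπν, mul_one, map_one] at this
      exact this
    have hl : l = 1 := by
      rw [hp, map_one, one_mul] at hq'
      apply Subtype.ext
      have := congrArg (fun h : H => ((h : F × A)).2) hq'
      simpa [hνval] using this
    rw [hp, hl]
    rfl
  have hΦsurj : Function.Surjective Φ := by
    intro h
    set p : P := π' h with hp
    have h1 : (((σ p)⁻¹ * h : H) : F × A).1 = 1 := by
      show ((σ p : F × A)⁻¹ * (h : F × A)).1 = 1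
      rw [Prod.fst_mul, Prod.fst_inv, hπσfst]
      have : (p : F) = ((h : F × A)).1 := rfl
      rw [this, inv_mul_cancel]
    have hmem : ((1 : F), (((σ p)⁻¹ * h : H) : F × A).2) ∈ H := by
      have hval : (((σ p)⁻¹ * h : H) : F × A)
          = ((1 : F), (((σ p)⁻¹ * h : H) : F × A).2) := by
        apply Prod.ext
        · exact h1
        · rfl
      rw [← hval]
      exact ((σ p)⁻¹ * h).2
    refine ⟨(p, ⟨(((σ p)⁻¹ * h : H) : F × A).2, hmem⟩), ?_⟩
    show σ p * ν _ = h
    have hνeq : ν ⟨(((σ p)⁻¹ * h : H) : F × A).2, hmem⟩ = (σ p)⁻¹ * h := by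
      apply Subtype.ext
      rw [hνval]
      apply Prod.ext
      · exact h1.symm
      · rfl
    rw [hνeq, mul_inv_cancel_left]
  set Φe : P × L ≃* H := MulEquiv.ofBijective Φ ⟨hΦinj, hΦsurj⟩ with hΦe
  haveI : Group.FG (P × L) := Group.fg_of_surjective (f := Φe.symm.toMonoidHom) Φe.symm.surjective
  have hrank : Group.rank H = Group.rank (P × L) := (Group.rank_congr Φe).symm
  rw [hrank]
  exact le_antisymm (rank_prod_le P L) (grp_rank_add_rank_le_rank_prod P L)
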